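/- If A is a left partial H-module algebra, then the set of left invariants A^H = {a ∈ A : h·a = a(h·1_A) for all h ∈ H} is contained in the set of right invariants A^{H,r} = {a ∈ A : h·a = (h·1_A)a for all h ∈ H}. -/

import Mathlib

open TensorProduct LinearMap

noncomputable section

variable (k : Type*) [Field k]
variable (H : Type*) [Ring H] [HopfAlgebra k H]
variable (A : Type*) [Ring A] [Algebra k A]

/-- A left partial action of a Hopf algebra `H` on an algebra `A` (Caenepeel–Janssen):
(PA1) `h·(ab) = (h₁·a)(h₂·b)`, (PA2) `1·a = a`, (PA3) `h·(g·a) = (h₁·1)((h₂g)·a)`. -/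
structure PartialAction where
  act : H →ₗ[k] A →ₗ[k] A
  pa1 : ∀ a b : A, act.flip (a * b) =
    LinearMap.mul' k A ∘ₗ TensorProduct.map (act.flip a) (act.flip b) ∘ₗ Coalgebra.comul
  pa2 : ∀ a : A, act 1 a = a
  pa3 : ∀ (g : H) (a : A), act.flip (act g a) =
    LinearMap.mul' k A ∘ₗ
      TensorProduct.map (act.flip 1) ((act.flip a) ∘ₗ LinearMap.mulRight k g) ∘ₗ Coalgebra.comul

variable {k H A}

/-- (PA4): the partial action is symmetric: `h·(g·a) = ((h₁g)·a)(h₂·1)`. -/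
def PartialAction.IsSymmetric (α : PartialAction k H A) : Prop :=
  ∀ (g : H) (a : A), α.act.flip (α.act g a) =
    LinearMap.mul' k A ∘ₗ
      TensorProduct.map ((α.act.flip a) ∘ₗ LinearMap.mulRight k g) (α.act.flip 1) ∘ₗ
        Coalgebra.comul

/-- Left invariants `A^H`. -/
def PartialAction.leftInv (α : PartialAction k H A) : Set A :=
  {a | ∀ h : H, α.act h a = a * α.act h 1}

/-- Right invariants `A^{H,r}`. -/
def PartialAction.rightInv (α : PartialAction k H A) : Set A :=
  {a | ∀ h : H, α.act h a = α.act h 1 * a}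

/-- `t` is a left integral in `H`. -/
def IsLeftIntegral (t : H) : Prop := ∀ h : H, h * t = Coalgebra.counit (R := k) h • t

/-- `t` is a right integral in `H`. -/
def IsRightIntegral (t : H) : Prop := ∀ h : H, t * h = Coalgebra.counit (R := k) h • t

/-- Convolution product on the dual `H* = H →ₗ[k] k`. -/
def conv (f g : H →ₗ[k] k) : H →ₗ[k] k :=
  LinearMap.mul' k k ∘ₗ TensorProduct.map f g ∘ₗ Coalgebra.comul

/-- `T ∈ H*` is a right integral: `T ∗ f = f(1) T`. -/
def IsRightIntegralDual (T : H →ₗ[k] k) : Prop := ∀ f : H →ₗ[k] k, conv T f = f 1 • T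

/-- `T ∈ H*` is a left integral: `f ∗ T = f(1) T`. -/
def IsLeftIntegralDual (T : H →ₗ[k] k) : Prop := ∀ f : H →ₗ[k] k, conv f T = f 1 • T

namespace PartialAction

variable (α : PartialAction k H A)

/-- `ψ (h ⊗ b) = Σ (h₁·b) ⊗ h₂`. -/
def psi : H ⊗[k] A →ₗ[k] A ⊗[k] H :=
  TensorProduct.map (TensorProduct.lift α.act) LinearMap.id
    ∘ₗ (TensorProduct.assoc k H A H).symm.toLinearMap
    ∘ₗ TensorProduct.map LinearMap.id (TensorProduct.comm k H A).toLinearMap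
    ∘ₗ (TensorProduct.assoc k H H A).toLinearMap
    ∘ₗ TensorProduct.map Coalgebra.comul LinearMap.id

/-- The smash product multiplication on `A ⊗ H`:
`(a # h)(b # g) = a(h₁·b) # h₂g`, as a linear map on the tensor square. -/
def smashMul' : (A ⊗[k] H) ⊗[k] (A ⊗[k] H) →ₗ[k] A ⊗[k] H :=
  TensorProduct.map (LinearMap.mul' k A) (LinearMap.mul' k H)
    ∘ₗ (TensorProduct.assoc k A A (H ⊗[k] H)).symm.toLinearMap
    ∘ₗ TensorProduct.map LinearMap.id
        ((TensorProduct.assoc k A H H).toLinearMap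
          ∘ₗ TensorProduct.map α.psi LinearMap.id
          ∘ₗ (TensorProduct.assoc k H A H).symm.toLinearMap)
    ∘ₗ (TensorProduct.assoc k A H (A ⊗[k] H)).toLinearMap

/-- The smash product multiplication, curried. -/
def sm : (A ⊗[k] H) →ₗ[k] (A ⊗[k] H) →ₗ[k] A ⊗[k] H := TensorProduct.curry α.smashMul'

/-- `1 # 1`. -/
def unit : A ⊗[k] H := (1 : A) ⊗ₜ[k] (1 : H)

/-- `j x = x · (1 # 1)`; the element `a #̲ h` of the partial smash product. -/
def j : A ⊗[k] H →ₗ[k] A ⊗[k] H := α.sm.flip (unit)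

/-- The partial smash product `A #̲ H`, as a subspace of `A ⊗ H`. -/
def smash : Submodule k (A ⊗[k] H) := LinearMap.range α.j

/-- The action of `A # H` on `A`: `(a # h) ▸ b = a (h·b)`. -/
def act2 : A ⊗[k] H →ₗ[k] A →ₗ[k] A :=
  TensorProduct.curry (LinearMap.mul' k A
    ∘ₗ TensorProduct.map LinearMap.id (TensorProduct.lift α.act)
    ∘ₗ (TensorProduct.assoc k A H A).toLinearMap)

end PartialAction

/-- `Φ(a # h) = a T(h)`. -/
def PhiMap (T : H →ₗ[k] k) : A ⊗[k] H →ₗ[k] A :=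
  (TensorProduct.rid k A).toLinearMap ∘ₗ TensorProduct.map LinearMap.id T

/-- `θ(f) = f(t₁) t₂`. -/
def thetaMap (t : H) : (H →ₗ[k] k) →ₗ[k] H :=
  (TensorProduct.lid k H).toLinearMap
    ∘ₗ LinearMap.applyₗ (Coalgebra.comul (R := k) t)
    ∘ₗ (TensorProduct.mapBilinear (RingHom.id k) H H k H).flip LinearMap.id

section AuxLemmas

variable (α : PartialAction k H A)

lemma pAct_pa1_repr (a b : A) {h : H} (r : Coalgebra.Repr k h (H × H)) :
    α.act h (a * b) = ∑ i ∈ r.index, α.act (r.left i) a * α.act (r.right i) b := by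
  have := LinearMap.congr_fun (α.pa1 a b) h
  rw [LinearMap.comp_apply, LinearMap.comp_apply, ← r.eq, map_sum, map_sum] at this
  simpa using this

lemma pAct_pa3_repr (g : H) (a : A) {h : H} (r : Coalgebra.Repr k h (H × H)) :
    α.act h (α.act g a) =
      ∑ i ∈ r.index, α.act (r.left i) 1 * α.act (r.right i * g) a := by
  have := LinearMap.congr_fun (α.pa3 g a) h
  rw [LinearMap.comp_apply, LinearMap.comp_apply, ← r.eq, map_sum, map_sum] at this
  simpa using this

lemma pAct_sum_counit_smul (h : H) (r : Coalgebra.Repr k h (H × H)) :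
    ∑ i ∈ r.index, Coalgebra.counit (R := k) (r.right i) • r.left i = h := by
  have h1 := congrArg (TensorProduct.rid k H) (Coalgebra.sum_tmul_counit_eq r)
  simp only [map_sum, TensorProduct.rid_tmul, one_smul] at h1
  exact h1

lemma pAct_lemA (a : A) (ha : ∀ h : H, α.act h a = a * α.act h 1) (c : A) (g : H) :
    α.act g (a * c) = a * α.act g c := by
  have hc : α.act g c = α.act g (1 * c) := by rw [one_mul]
  rw [pAct_pa1_repr α a c (Coalgebra.Repr.arbitrary k g), hc,
    pAct_pa1_repr α 1 c (Coalgebra.Repr.arbitrary k g), Finset.mul_sum]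
  simp [ha, mul_assoc]

lemma pAct_claim1 (b : A) (h : H) (r : Coalgebra.Repr k h (H × H)) :
    ∑ i ∈ r.index, α.act (r.left i) (α.act (HopfAlgebra.antipode (R := k) (r.right i)) b)
      = α.act h 1 * b := by
  classical
  set S : H →ₗ[k] H := HopfAlgebra.antipode (R := k) with hS
  let r1 : ∀ i : H × H, Coalgebra.Repr k (r.left i) (H × H) := fun i => Coalgebra.Repr.arbitrary k _
  let r2 : ∀ i : H × H, Coalgebra.Repr k (r.right i) (H × H) := fun i => Coalgebra.Repr.arbitrary k _
  let Ψ : H ⊗[k] (H ⊗[k] H) →ₗ[k] A :=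
    LinearMap.mul' k A ∘ₗ TensorProduct.map (α.act.flip 1)
      (α.act.flip b ∘ₗ LinearMap.mul' k H ∘ₗ LinearMap.lTensor H S)
  have hpure : ∀ x y z : H, Ψ (x ⊗ₜ (y ⊗ₜ z)) = α.act x 1 * α.act (y * S z) b := by
    intro x y z
    simp [Ψ]
  have hΨ := congrArg Ψ (Coalgebra.sum_tmul_tmul_eq r r1 r2)
  simp only [map_sum, hpure] at hΨ
  have hL : ∀ i : H × H,
      α.act (r.left i) (α.act (S (r.right i)) b)
        = ∑ j ∈ (r1 i).index, α.act ((r1 i).left j) 1 * α.act ((r1 i).right j * S (r.right i)) b :=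
    fun i => pAct_pa3_repr α (S (r.right i)) b (r1 i)
  have hR : ∀ i : H × H,
      (∑ j ∈ (r2 i).index, α.act (r.left i) 1 * α.act ((r2 i).left j * S ((r2 i).right j)) b)
        = Coalgebra.counit (R := k) (r.right i) • (α.act (r.left i) 1 * b) := by
    intro i
    rw [← Finset.mul_sum]
    have h2 : (∑ j ∈ (r2 i).index, α.act ((r2 i).left j * S ((r2 i).right j)) b)
        = α.act ((Coalgebra.counit (R := k) (r.right i) : k) • (1 : H)) b := by
      rw [← HopfAlgebra.sum_mul_antipode_eq_smul (R := k) (r2 i), map_sum,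
        LinearMap.sum_apply]
    rw [h2, map_smul, LinearMap.smul_apply, α.pa2, mul_smul_comm]
  calc ∑ i ∈ r.index, α.act (r.left i) (α.act (S (r.right i)) b)
      = ∑ i ∈ r.index, ∑ j ∈ (r1 i).index,
          α.act ((r1 i).left j) 1 * α.act ((r1 i).right j * S (r.right i)) b := by
        exact Finset.sum_congr rfl fun i _ => hL i
    _ = ∑ i ∈ r.index, ∑ j ∈ (r2 i).index,
          α.act (r.left i) 1 * α.act ((r2 i).left j * S ((r2 i).right j)) b := hΨ
    _ = ∑ i ∈ r.index, Coalgebra.counit (R := k) (r.right i) • (α.act (r.left i) 1 * b) := by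
        exact Finset.sum_congr rfl fun i _ => hR i
    _ = α.act h 1 * b := by
        have e := pAct_sum_counit_smul h r
        simp only [← smul_mul_assoc]
        rw [← Finset.sum_mul]
        congr 1
        calc ∑ i ∈ r.index, Coalgebra.counit (R := k) (r.right i) • α.act (r.left i) 1
            = α.act (∑ i ∈ r.index, Coalgebra.counit (R := k) (r.right i) • r.left i) 1 := by
              rw [map_sum, LinearMap.sum_apply]
              simp
          _ = α.act h 1 := by rw [e]

end AuxLemmas

/-- the left invariants are contained in the right invariants. -/
theorem leftInv_subset_rightInv
    {k : Type*} [Field k] {H : Type*} [Ring H] [HopfAlgebra k H]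
    {A : Type*} [Ring A] [Algebra k A] (α : PartialAction k H A) :
    α.leftInv ⊆ α.rightInv := by
  intro a ha
  intro h
  have ha' : ∀ h : H, α.act h a = a * α.act h 1 := ha
  set S : H →ₗ[k] H := HopfAlgebra.antipode (R := k) with hS
  set r := Coalgebra.Repr.arbitrary k h with hr
  have key1 := pAct_claim1 α a h r
  have key2 : ∑ i ∈ r.index, α.act (r.left i) (α.act (S (r.right i)) a)
      = a * α.act h 1 := by
    have step : ∀ i : H × H, α.act (r.left i) (α.act (S (r.right i)) a)
        = a * α.act (r.left i) (α.act (S (r.right i)) 1) := by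
      intro i
      rw [ha' (S (r.right i)), pAct_lemA α a ha' _ (r.left i)]
    rw [Finset.sum_congr rfl fun i _ => step i, ← Finset.mul_sum,
      pAct_claim1 α 1 h r, mul_one]
  show α.act h a = α.act h 1 * a
  rw [ha' h, ← key2, key1]

end
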